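/- (Dani correspondence) For n ≥ 1 and x ∈ ℝ^n, the vector x is singular if and only if δ(g_k u_x ℤ^{n+1}) → 0 as k → ∞ (k ∈ ℕ); by Mahler's compactness criterion this says exactly that the trajectory {g_k u_x ℤ^{n+1} : k ≥ 0} is divergent in the space of unimodular lattices SL_{n+1}(ℝ)/SL_{n+1}(ℤ). -/

import Mathlib

open MeasureTheory Filter

/-- A vector `x ∈ ℝ^n` is singular. -/
def IsSingularVec {n : ℕ} (x : Fin n → ℝ) : Prop :=
  ∀ c : ℝ, 0 < c → ∃ Q₀ : ℝ, 0 < Q₀ ∧ ∀ Q : ℝ, Q₀ ≤ Q →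
    ∃ q : Fin n → ℤ, q ≠ 0 ∧ ∃ q₀ : ℤ,
      |(∑ i, (q i : ℝ) * x i) + (q₀ : ℝ)| < c / Q ^ n ∧ ∀ i, |(q i : ℝ)| ≤ Q

/-- The diagonal matrix `g_k = diag(e^{nk}, e^{-k}, …, e^{-k}) ∈ SL_{n+1}(ℝ)`. -/
noncomputable def gMat (n : ℕ) (k : ℕ) : Matrix (Fin (n+1)) (Fin (n+1)) ℝ :=
  fun i j => if i = j then (if i = 0 then Real.exp ((n : ℝ) * (k : ℝ))
    else Real.exp (-(k : ℝ))) else 0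

/-- The unipotent matrix `u_x ∈ SL_{n+1}(ℝ)` with first row `(1, x₁, …, x_n)` and all other
rows equal to those of the identity. -/
noncomputable def uMat {n : ℕ} (x : Fin n → ℝ) : Matrix (Fin (n+1)) (Fin (n+1)) ℝ :=
  fun i j => if i = j then 1 else if i = 0 then (Fin.cons 0 x : Fin (n+1) → ℝ) j else 0

/-- `δ(g ℤ^m)`: the infimum of the sup-norms of the nonzero vectors of the lattice
`g ℤ^m ⊆ ℝ^m`. -/
noncomputable def latticeDelta {m : ℕ} (g : Matrix (Fin m) (Fin m) ℝ) : ℝ :=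
  sInf {t : ℝ | ∃ v : Fin m → ℤ, v ≠ 0 ∧ t = ‖g.mulVec (fun i => (v i : ℝ))‖}

lemma uMat_mulVec {n : ℕ} (x : Fin n → ℝ) (w : Fin (n+1) → ℝ) :
    (uMat x).mulVec w = Fin.cons (w 0 + ∑ i : Fin n, x i * w i.succ) (fun i => w i.succ) := by
  funext i
  refine Fin.cases ?_ ?_ i
  · have h0 : ∀ j : Fin n, (0 : Fin (n+1)) ≠ j.succ := fun j => (Fin.succ_ne_zero j).symm
    simp [uMat, Matrix.mulVec, dotProduct, Fin.sum_univ_succ, h0]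
  · intro j
    simp [uMat, Matrix.mulVec, dotProduct, Fin.succ_ne_zero,
      Finset.sum_ite_eq, Fin.cons_succ]

lemma gMat_eq (n k : ℕ) : gMat n k = Matrix.diagonal
    (fun i => if i = 0 then Real.exp ((n : ℝ) * (k : ℝ)) else Real.exp (-(k : ℝ))) := by
  funext i j
  simp [gMat, Matrix.diagonal]

lemma key_mulVec {n : ℕ} (x : Fin n → ℝ) (k : ℕ) (w : Fin (n+1) → ℝ) :
    (gMat n k * uMat x).mulVec w =
      Fin.cons (Real.exp ((n : ℝ) * (k : ℝ)) * (w 0 + ∑ i : Fin n, x i * w i.succ))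
        (fun i => Real.exp (-(k : ℝ)) * w i.succ) := by
  rw [← Matrix.mulVec_mulVec, uMat_mulVec, gMat_eq]
  funext i
  refine Fin.cases ?_ ?_ i
  · simp [Matrix.mulVec_diagonal]
  · intro j
    simp [Matrix.mulVec_diagonal, Fin.succ_ne_zero]

lemma latticeSet_nonempty {m : ℕ} (g : Matrix (Fin (m+1)) (Fin (m+1)) ℝ) :
    Set.Nonempty {t : ℝ | ∃ v : Fin (m+1) → ℤ, v ≠ 0 ∧ t = ‖g.mulVec (fun i => (v i : ℝ))‖} := by
  refine ⟨_, fun _ => 1, ?_, rfl⟩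
  intro h
  have := congrFun h 0
  simp at this

lemma latticeSet_bddBelow {m : ℕ} (g : Matrix (Fin m) (Fin m) ℝ) :
    BddBelow {t : ℝ | ∃ v : Fin m → ℤ, v ≠ 0 ∧ t = ‖g.mulVec (fun i => (v i : ℝ))‖} := by
  refine ⟨0, ?_⟩
  rintro t ⟨v, hv, rfl⟩
  positivity

lemma latticeDelta_nonneg {m : ℕ} (g : Matrix (Fin m) (Fin m) ℝ) : 0 ≤ latticeDelta g := by
  apply Real.sInf_nonneg
  rintro t ⟨v, hv, rfl⟩
  positivity

/-- Dani correspondence: `x` is singular iff `δ(g_k u_x ℤ^{n+1}) → 0` as `k → ∞`. -/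
theorem stmt_7 (n : ℕ) (hn : 1 ≤ n) (x : Fin n → ℝ) :
    IsSingularVec x ↔
      Tendsto (fun k : ℕ => latticeDelta (gMat n k * uMat x)) atTop (nhds 0) := by
  have hexpk : ∀ k : ℕ, Real.exp ((n : ℝ) * (k : ℝ)) = Real.exp (k : ℝ) ^ n := fun k =>
    Real.exp_nat_mul _ n
  constructor
  · -- singular → δ → 0
    intro hs
    rw [Metric.tendsto_atTop]
    intro ε hε
    set ε' := ε / 2 with hε'def
    have hε'pos : 0 < ε' := by positivity
    obtain ⟨Q₀, hQ₀pos, hQ⟩ := hs (ε' ^ (n + 1)) (by positivity)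
    refine ⟨⌈Real.log (Q₀ / ε')⌉₊, fun k hk => ?_⟩
    have hek : (0:ℝ) < Real.exp (k : ℝ) := Real.exp_pos _
    set Q : ℝ := ε' * Real.exp (k : ℝ) with hQdef
    have hQpos : 0 < Q := by positivity
    have hQge : Q₀ ≤ Q := by
      have h1 : Real.log (Q₀ / ε') ≤ (k : ℝ) := by
        calc Real.log (Q₀ / ε') ≤ (⌈Real.log (Q₀ / ε')⌉₊ : ℝ) := Nat.le_ceil _
        _ ≤ (k : ℝ) := by exact_mod_cast hk
      have h2 : Q₀ / ε' ≤ Real.exp (k : ℝ) := by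
        rw [← Real.exp_log (show (0:ℝ) < Q₀ / ε' by positivity)]
        exact Real.exp_le_exp.mpr h1
      calc Q₀ = ε' * (Q₀ / ε') := by field_simp
      _ ≤ ε' * Real.exp (k : ℝ) := by
        exact mul_le_mul_of_nonneg_left h2 hε'pos.le
    obtain ⟨q, hq0, q₀, habs, hbnd⟩ := hQ Q hQge
    set v : Fin (n+1) → ℤ := Fin.cons q₀ q with hvdef
    have hv : v ≠ 0 := by
      intro h
      apply hq0
      funext i
      have := congrFun h i.succ
      simpa [hvdef] using this
    -- the lattice vector
    have hQn : Q ^ n = ε' ^ n * Real.exp ((n : ℝ) * (k : ℝ)) := by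
      rw [hexpk, hQdef, mul_pow]
    have habs' : |(∑ i, (q i : ℝ) * x i) + (q₀ : ℝ)| <
        ε' / Real.exp ((n : ℝ) * (k : ℝ)) := by
      have : ε' ^ (n + 1) / Q ^ n = ε' / Real.exp ((n : ℝ) * (k : ℝ)) := by
        rw [hQn, pow_succ]
        field_simp
      rwa [this] at habs
    have hnorm : ‖(gMat n k * uMat x).mulVec (fun i => (v i : ℝ))‖ ≤ ε' := by
      rw [key_mulVec]
      rw [pi_norm_le_iff_of_nonneg hε'pos.le]
      intro i
      refine Fin.cases ?_ ?_ i
      · rw [Fin.cons_zero]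
        have hE : (0:ℝ) < Real.exp ((n : ℝ) * (k : ℝ)) := Real.exp_pos _
        have : ((Fin.cons (q₀ : ℤ) q : Fin (n+1) → ℤ) 0 : ℝ) = (q₀ : ℝ) := by simp
        rw [Real.norm_eq_abs, abs_mul, abs_of_pos hE]
        have heq : ((v 0 : ℝ) + ∑ i : Fin n, x i * (v i.succ : ℝ)) =
            (∑ i, (q i : ℝ) * x i) + (q₀ : ℝ) := by
          simp only [hvdef, Fin.cons_zero, Fin.cons_succ]
          rw [add_comm]
          congr 1
          exact Finset.sum_congr rfl fun i _ => mul_comm _ _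
        have := habs'
        calc Real.exp ((n : ℝ) * (k : ℝ)) * |(v 0 : ℝ) + ∑ i : Fin n, x i * (v i.succ : ℝ)|
            = Real.exp ((n : ℝ) * (k : ℝ)) * |(∑ i, (q i : ℝ) * x i) + (q₀ : ℝ)| := by
              rw [heq]
        _ ≤ Real.exp ((n : ℝ) * (k : ℝ)) * (ε' / Real.exp ((n : ℝ) * (k : ℝ))) :=
              mul_le_mul_of_nonneg_left habs'.le hE.le
        _ = ε' := by field_simp
      · intro j
        rw [Fin.cons_succ, Real.norm_eq_abs, abs_mul,
          abs_of_pos (Real.exp_pos _)]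
        have hvj : (v j.succ : ℝ) = (q j : ℝ) := by simp [hvdef]
        rw [hvj]
        calc Real.exp (-(k:ℝ)) * |(q j : ℝ)| ≤ Real.exp (-(k:ℝ)) * Q :=
              mul_le_mul_of_nonneg_left (hbnd j) (Real.exp_pos _).le
        _ = ε' * (Real.exp (-(k:ℝ)) * Real.exp (k:ℝ)) := by rw [hQdef]; ring
        _ = ε' := by rw [← Real.exp_add]; simp
    have hD : latticeDelta (gMat n k * uMat x) ≤ ε' := by
      refine le_trans (csInf_le (latticeSet_bddBelow _) ⟨v, hv, rfl⟩) hnorm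
    have hDnn := latticeDelta_nonneg (gMat n k * uMat x)
    rw [Real.dist_eq, sub_zero, abs_of_nonneg hDnn]
    calc latticeDelta (gMat n k * uMat x) ≤ ε' := hD
    _ < ε := by rw [hε'def]; linarith
  · -- δ → 0 → singular
    intro ht c hc
    set ε := min c (Real.exp (-1)) with hεdef
    have hεpos : 0 < ε := lt_min hc (Real.exp_pos _)
    have hεc : ε ≤ c := min_le_left _ _
    have hεe : ε ≤ Real.exp (-1) := min_le_right _ _
    have hε1 : ε < 1 := lt_of_le_of_lt hεe (by
      rw [show (1:ℝ) = Real.exp 0 by simp]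
      exact Real.exp_lt_exp.mpr (by norm_num))
    obtain ⟨K, hK⟩ := Metric.tendsto_atTop.mp ht ε hεpos
    refine ⟨ε * Real.exp (K : ℝ), by positivity, fun Q hQge => ?_⟩
    have hQpos : 0 < Q := lt_of_lt_of_le (by positivity) hQge
    set t := Q / ε with htdef
    have htpos : 0 < t := by positivity
    have htK : Real.exp (K : ℝ) ≤ t := by
      rw [htdef, le_div_iff₀ hεpos]
      linarith [hQge]
    have hlogt : (K : ℝ) ≤ Real.log t := (Real.le_log_iff_exp_le htpos).mpr htK
    set k := ⌊Real.log t⌋₊ with hkdef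
    have hkK : K ≤ k := Nat.le_floor hlogt
    have hlognn : 0 ≤ Real.log t := le_trans (Nat.cast_nonneg K) hlogt
    have hek_le : Real.exp (k : ℝ) ≤ t := by
      rw [← Real.exp_log htpos]
      exact Real.exp_le_exp.mpr (Nat.floor_le hlognn)
    have ht_lt : t < Real.exp ((k : ℝ) + 1) := by
      rw [← Real.exp_log htpos]
      exact Real.exp_lt_exp.mpr (Nat.lt_floor_add_one _)
    have hQ_le_ek : Q ≤ Real.exp (k : ℝ) := by
      have h1 : Q < ε * Real.exp ((k : ℝ) + 1) := by
        rw [htdef] at ht_lt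
        calc Q = ε * (Q / ε) := by field_simp
        _ < ε * Real.exp ((k : ℝ) + 1) := by
            exact mul_lt_mul_of_pos_left ht_lt hεpos
      have h2 : ε * Real.exp ((k : ℝ) + 1) ≤ Real.exp (k : ℝ) := by
        calc ε * Real.exp ((k : ℝ) + 1) ≤ Real.exp (-1) * Real.exp ((k : ℝ) + 1) :=
              mul_le_mul_of_nonneg_right hεe (Real.exp_pos _).le
        _ = Real.exp (k : ℝ) := by rw [← Real.exp_add]; ring_nf
      linarith
    have hεek : ε * Real.exp (k : ℝ) ≤ Q := by
      rw [htdef] at hek_le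
      calc ε * Real.exp (k : ℝ) ≤ ε * (Q / ε) := mul_le_mul_of_nonneg_left hek_le hεpos.le
      _ = Q := by field_simp
    -- get the short vector at time k
    have hDk : latticeDelta (gMat n k * uMat x) < ε := by
      have := hK k hkK
      rw [Real.dist_eq, sub_zero] at this
      exact lt_of_le_of_lt (le_abs_self _) this
    obtain ⟨t', ⟨v, hv0, rfl⟩, hlt⟩ :=
      exists_lt_of_csInf_lt (latticeSet_nonempty (gMat n k * uMat x)) hDk
    rw [key_mulVec] at hlt
    -- coordinate bounds
    have h0 : Real.exp ((n : ℝ) * (k : ℝ)) *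
        |(v 0 : ℝ) + ∑ i : Fin n, x i * (v i.succ : ℝ)| < ε := by
      have := lt_of_le_of_lt (norm_le_pi_norm _ (0 : Fin (n+1))) hlt
      rwa [Fin.cons_zero, Real.norm_eq_abs, abs_mul,
        abs_of_pos (Real.exp_pos _)] at this
    have hi : ∀ j : Fin n, Real.exp (-(k:ℝ)) * |(v j.succ : ℝ)| < ε := by
      intro j
      have := lt_of_le_of_lt (norm_le_pi_norm _ j.succ) hlt
      rwa [Fin.cons_succ, Real.norm_eq_abs, abs_mul,
        abs_of_pos (Real.exp_pos _)] at this
    set q : Fin n → ℤ := fun i => v i.succ with hqdef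
    have hqne : q ≠ 0 := by
      intro h
      have hvs : ∀ j : Fin n, v j.succ = 0 := by
        intro j; exact congrFun h j
      have hv00 : v 0 ≠ 0 := by
        intro h0'
        apply hv0
        funext i
        refine Fin.cases ?_ ?_ i
        · exact h0'
        · exact hvs
      have h1le : (1:ℝ) ≤ |(v 0 : ℝ)| := by
        rw [← Int.cast_abs]
        exact_mod_cast Int.one_le_abs hv00
      have hsum0 : (∑ i : Fin n, x i * (v i.succ : ℝ)) = 0 := by
        apply Finset.sum_eq_zero
        intro i _
        rw [hvs i]
        simp
      rw [hsum0, add_zero] at h0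
      have hE1 : (1:ℝ) ≤ Real.exp ((n : ℝ) * (k : ℝ)) :=
        Real.one_le_exp (by positivity)
      nlinarith
    refine ⟨q, hqne, v 0, ?_, ?_⟩
    · have heq : (∑ i, (q i : ℝ) * x i) + ((v 0 : ℤ) : ℝ) =
          (v 0 : ℝ) + ∑ i : Fin n, x i * (v i.succ : ℝ) := by
        rw [add_comm]
        congr 1
        exact Finset.sum_congr rfl fun i _ => mul_comm _ _
      rw [heq]
      have hb1 : |(v 0 : ℝ) + ∑ i : Fin n, x i * (v i.succ : ℝ)| <
          ε / Real.exp ((n : ℝ) * (k : ℝ)) := by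
        rw [lt_div_iff₀ (Real.exp_pos _)]
        linarith [h0]
      refine lt_of_lt_of_le hb1 ?_
      -- ε / e^{nk} ≤ c / Q^n
      have hQn_le : Q ^ n ≤ Real.exp ((n : ℝ) * (k : ℝ)) := by
        rw [hexpk]
        exact pow_le_pow_left₀ hQpos.le hQ_le_ek n
      exact div_le_div₀ hc.le hεc (by positivity) hQn_le
    · intro i
      have := hi i
      have h1 : |(v i.succ : ℝ)| < ε * Real.exp (k : ℝ) := by
        have hE : (0:ℝ) < Real.exp (-(k:ℝ)) := Real.exp_pos _
        rw [show ε * Real.exp (k:ℝ) = ε / Real.exp (-(k:ℝ)) by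
          rw [Real.exp_neg]; field_simp]
        rw [lt_div_iff₀ hE]
        linarith [this]
      exact le_of_lt (lt_of_lt_of_le h1 hεek)
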